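/- Let κ be an infinite cardinal and let F be a family of finite subsets of κ that is hereditary (closed under subsets), compact (closed as a subset of 2^κ with the product topology), large (for every infinite A ⊆ κ and every n ∈ ℕ some n-element subset of A belongs to F), and contains all singletons. Define a norm on c₀₀(κ) (finitely supported real functions on κ) by ‖x‖_F = sup{ |Σ_{γ∈s} x(γ)| : s ∈ F }. Then the unit vectors (u_γ)_{γ<κ} in (c₀₀(κ), ‖·‖_F) satisfy: (i) ‖u_γ‖_F = 1 for every γ; (ii) the sequence is weakly null: for every ‖·‖_F-bounded linear functional f on c₀₀(κ) and every ε > 0 the set {γ : |f(u_γ)| ≥ ε} is finite; and (iii) no infinite subsequence is subsymmetric: for every infinite A ⊆ κ and every constant K ≥ 1 there exist finite sets s, t ⊆ A with |s| = |t| = m and scalars (a_i)_{i<m} with ‖Σ_{i<m} a_i u_{t(i)}‖_F > K·‖Σ_{i<m} a_i u_{s(i)}‖_F, where s(i), t(i) denote the i-th elements of s, t in increasing order. -/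

import Mathlib

/-- The Schreier-type norm on `c₀₀` determined by a family `F` of finite sets:
`‖x‖_F = sup { |Σ_{γ∈s} x(γ)| : s ∈ F }`. -/
noncomputable def normF {ι : Type*} (F : Set (Finset ι)) (x : ι →₀ ℝ) : ℝ :=
  sSup ((fun s : Finset ι => |∑ γ ∈ s, x γ|) '' F)

set_option linter.deprecated false

section Ptak

variable {ι : Type*}

/-- The "bigger set in F" relation; well-founded when `F` is compact. -/
def FRel (F : Set (Finset ι)) (a b : Finset ι) : Prop := a ∈ F ∧ b ⊂ a

theorem FRel_wf (F : Set (Finset ι))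
    (hclosed : IsClosed {f : ι → Bool | ∃ s ∈ F, ∀ a, f a = true ↔ a ∈ s}) :
    WellFounded (FRel F) := by
  classical
  haveI : IsIrrefl (Finset ι) (FRel F) := ⟨fun a h => h.2.ne rfl⟩
  haveI : IsTrans (Finset ι) (FRel F) := ⟨fun a b c h1 h2 => ⟨h1.1, h2.2.trans h1.2⟩⟩
  haveI : IsStrictOrder (Finset ι) (FRel F) := ⟨⟩
  rw [RelEmbedding.wellFounded_iff_isEmpty]
  constructor
  intro g
  have hrel : ∀ {n m : ℕ}, n < m → FRel F (g m) (g n) := fun {n m} h => g.map_rel_iff.mpr h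
  set B : Set ι := ⋃ n, (↑(g (n + 1)) : Set ι) with hB
  have hmono : ∀ {n m : ℕ}, n ≤ m → (g n : Finset ι) ⊆ g m := by
    intro n m h
    rcases eq_or_lt_of_le h with rfl | h
    · exact subset_rfl
    · exact (hrel h).2.subset
  have hBinf : B.Infinite := by
    intro hf
    have hsm : StrictMono fun n => (g n).card := by
      intro n m h
      exact Finset.card_lt_card (hrel h).2
    have hle : ∀ n, (g (n + 1)).card ≤ hf.toFinset.card := by
      intro n
      apply Finset.card_le_card
      intro a ha
      rw [Set.Finite.mem_toFinset]
      exact Set.mem_iUnion.2 ⟨n, ha⟩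
    have h1 : hf.toFinset.card + 1 + 1 ≤ (g (hf.toFinset.card + 1 + 1)).card := hsm.le_apply
    have h2 := hle (hf.toFinset.card + 1)
    omega
  -- the pointwise limit of the characteristic functions
  set glim : ι → Bool := fun a => decide (a ∈ B) with hglim
  have htend : Filter.Tendsto (fun n (a : ι) => decide (a ∈ g (n + 1))) Filter.atTop (nhds glim) := by
    rw [tendsto_pi_nhds]
    intro a
    by_cases ha : a ∈ B
    · have hga : glim a = true := by simp only [hglim, decide_eq_true_eq]; exact ha
      rw [hga]
      rcases Set.mem_iUnion.1 ha with ⟨n₀, hn₀⟩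
      refine tendsto_const_nhds.congr' ?_
      filter_upwards [Filter.eventually_ge_atTop n₀] with n hn
      exact (decide_eq_true (hmono (by omega) hn₀)).symm
    · have hga : glim a = false := by
        simp only [hglim, decide_eq_false_iff_not]; exact ha
      rw [hga]
      refine tendsto_const_nhds.congr' ?_
      filter_upwards with n
      exact (decide_eq_false (fun hc => ha (Set.mem_iUnion.2 ⟨n, hc⟩))).symm
  have hmem : glim ∈ {f : ι → Bool | ∃ s ∈ F, ∀ a, f a = true ↔ a ∈ s} := by
    refine hclosed.mem_of_tendsto htend ?_
    filter_upwards with n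
    exact ⟨g (n + 1), (hrel (Nat.lt_succ_self n)).1, fun a => by simp⟩
  rcases hmem with ⟨s, _, hs⟩
  apply hBinf
  have hBs : B = ↑s := by
    ext a
    have := hs a
    simp only [hglim, decide_eq_true_eq] at this
    simpa using this
  rw [hBs]
  exact s.finite_toSet

end Ptak

theorem ptak_phi [DecidableEq ι] {F : Set (Finset ι)} (hher : ∀ s ∈ F, ∀ t ⊆ s, t ∈ F)
    (hwf : WellFounded (FRel F)) :
    ∀ ρ : Ordinal, ∀ T : Finset (Finset ι), (∀ t ∈ T, (hwf.apply t).rank < ρ) →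
    ∀ A : Set ι, A.Infinite → (∀ t ∈ T, ∀ γ ∈ A, γ ∉ t) →
    ∀ δ : ℝ, 0 < δ →
    ∃ (s : Finset ι) (lam : ι → ℝ), ↑s ⊆ A ∧ (∀ γ, 0 ≤ lam γ) ∧ (∀ γ ∉ s, lam γ = 0) ∧
      (∑ γ ∈ s, lam γ = 1) ∧ ∀ t ∈ T, ∀ w ⊆ s, t ∪ w ∈ F → ∑ γ ∈ w, lam γ < δ := by
  classical
  intro ρ
  induction ρ using Ordinal.induction with
  | _ ρ IH =>
  intro T hT A hA hdisj δ hδ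
  -- helper: a single block handling a family `T'` of strictly smaller ranks
  have block : ∀ T' : Finset (Finset ι), (∀ x ∈ T', Order.succ ((hwf.apply x).rank) < ρ) →
      ∀ A' : Set ι, A'.Infinite → (∀ x ∈ T', ∀ γ ∈ A', γ ∉ x) →
      ∀ δ' : ℝ, 0 < δ' →
      ∃ (s : Finset ι) (lam : ι → ℝ), ↑s ⊆ A' ∧ (∀ γ, 0 ≤ lam γ) ∧ (∀ γ ∉ s, lam γ = 0) ∧
        (∑ γ ∈ s, lam γ = 1) ∧ ∀ t ∈ T', ∀ w ⊆ s, t ∪ w ∈ F → ∑ γ ∈ w, lam γ < δ' := by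
    intro T' hT' A' hA' hdisj' δ' hδ'
    rcases T'.eq_empty_or_nonempty with rfl | hne
    · obtain ⟨γ, hγ⟩ := hA'.nonempty
      refine ⟨{γ}, fun β => if β = γ then 1 else 0, by simpa using hγ, ?_, ?_, by simp, ?_⟩
      · intro β; dsimp only; split <;> norm_num
      · intro β hβ; dsimp only; rw [if_neg]; simpa using hβ
      · intro t ht; exact absurd ht (by simp)
    · set ρ' := T'.sup fun x => Order.succ ((hwf.apply x).rank) with hρ'def
      have hρ' : ρ' < ρ := by
        obtain ⟨x, hx⟩ := hne
        refine (Finset.sup_lt_iff ?_).mpr hT'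
        exact lt_of_le_of_lt bot_le (hT' x hx)
      have hlt : ∀ x ∈ T', (hwf.apply x).rank < ρ' := fun x hx =>
        lt_of_lt_of_le (Order.lt_succ _)
          (Finset.le_sup (f := fun x => Order.succ ((hwf.apply x).rank)) hx)
      exact IH ρ' hρ' T' hlt A' hA' hdisj' δ' hδ'
  obtain ⟨k₀, hk₀⟩ := exists_nat_one_div_lt (half_pos hδ)
  set k : ℕ := k₀ + 1 with hkdef
  have hkpos : (0:ℝ) < (k:ℝ) := by positivity
  have hk : 1 / (k:ℝ) < δ / 2 := by exact_mod_cast hk₀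
  have inner : ∀ n : ℕ, ∃ (s : Finset ι) (lam : ι → ℝ), ↑s ⊆ A ∧ (∀ γ, 0 ≤ lam γ) ∧
      (∀ γ ∉ s, lam γ = 0) ∧ (∑ γ ∈ s, lam γ = (n:ℝ)) ∧
      ∀ t ∈ T, ∀ w ⊆ s, t ∪ w ∈ F → ∑ γ ∈ w, lam γ < 1 + n * (δ/2) := by
    intro n
    induction n with
    | zero =>
      exact ⟨∅, fun _ => 0, by simp, fun _ => le_rfl, fun _ _ => rfl, by simp, by
        intro t _ w _ _; simp⟩
    | succ n ihn =>
      obtain ⟨s, lam, hsA, hlam0, hvan, hsum, hbound⟩ := ihn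
      set T' : Finset (Finset ι) :=
        (T.biUnion fun t => s.image fun m => insert m t).filter (fun x => x ∈ F) with hT'def
      have hT'mem : ∀ x, x ∈ T' ↔ ((∃ t ∈ T, ∃ m ∈ s, insert m t = x) ∧ x ∈ F) := by
        intro x
        simp [hT'def]
      have hT'rank : ∀ x ∈ T', Order.succ ((hwf.apply x).rank) < ρ := by
        intro x hx
        obtain ⟨⟨t, ht, m, hm, rfl⟩, hxF⟩ := (hT'mem x).1 hx
        have hmt : m ∉ t := hdisj t ht m (hsA hm)
        have hrel : FRel F (insert m t) t := ⟨hxF, Finset.ssubset_insert hmt⟩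
        have := Acc.rank_lt_of_rel (hwf.apply _) hrel
        exact lt_of_le_of_lt (Order.succ_le_iff.mpr this) (hT t ht)
      have hA' : (A \ ↑s).Infinite := hA.diff s.finite_toSet
      have hdisj' : ∀ x ∈ T', ∀ γ ∈ A \ ↑s, γ ∉ x := by
        intro x hx γ hγ hc
        obtain ⟨⟨t, ht, m, hm, rfl⟩, -⟩ := (hT'mem x).1 hx
        rcases Finset.mem_insert.1 hc with rfl | hc
        · exact hγ.2 hm
        · exact hdisj t ht γ hγ.1 hc
      obtain ⟨s', lam', hs'A, hlam'0, hvan', hsum', hbound'⟩ :=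
        block T' hT'rank _ hA' hdisj' (δ/2) (half_pos hδ)
      have hss' : Disjoint s s' := by
        rw [Finset.disjoint_left]
        intro x hx hx'
        exact (hs'A hx').2 hx
      refine ⟨s ∪ s', fun γ => lam γ + lam' γ, ?_, ?_, ?_, ?_, ?_⟩
      · rw [Finset.coe_union]
        exact Set.union_subset hsA (hs'A.trans Set.diff_subset)
      · exact fun γ => add_nonneg (hlam0 γ) (hlam'0 γ)
      · intro γ hγ
        rw [Finset.mem_union, not_or] at hγ
        show lam γ + lam' γ = 0
        rw [hvan γ hγ.1, hvan' γ hγ.2, add_zero]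
      · rw [Finset.sum_add_distrib]
        have e1 : ∑ γ ∈ s ∪ s', lam γ = ∑ γ ∈ s, lam γ :=
          (Finset.sum_subset Finset.subset_union_left fun x _ hx => hvan x hx).symm
        have e2 : ∑ γ ∈ s ∪ s', lam' γ = ∑ γ ∈ s', lam' γ :=
          (Finset.sum_subset Finset.subset_union_right fun x _ hx => hvan' x hx).symm
        rw [e1, e2, hsum, hsum']
        push_cast; ring
      · intro t ht w hw hF
        have hsplit : ∑ γ ∈ w, (lam γ + lam' γ) =
            ∑ γ ∈ w ∩ s, lam γ + ∑ γ ∈ w ∩ s', lam' γ := by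
          rw [Finset.sum_add_distrib]
          congr 1
          · exact (Finset.sum_subset Finset.inter_subset_left fun x hx hnx =>
              hvan x fun hxs => hnx (Finset.mem_inter.2 ⟨hx, hxs⟩)).symm
          · exact (Finset.sum_subset Finset.inter_subset_left fun x hx hnx =>
              hvan' x fun hxs => hnx (Finset.mem_inter.2 ⟨hx, hxs⟩)).symm
        rw [hsplit]
        rcases (w ∩ s).eq_empty_or_nonempty with hemp | ⟨m, hm⟩
        · rw [hemp, Finset.sum_empty]
          have h1 : ∑ γ ∈ w ∩ s', lam' γ ≤ ∑ γ ∈ s', lam' γ :=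
            Finset.sum_le_sum_of_subset_of_nonneg Finset.inter_subset_right
              fun γ _ _ => hlam'0 γ
          rw [hsum'] at h1
          have : (0:ℝ) < (n+1) * (δ/2) := by positivity
          push_cast
          linarith
        · obtain ⟨hmw, hms⟩ := Finset.mem_inter.1 hm
          have hpart1 : ∑ γ ∈ w ∩ s, lam γ < 1 + n * (δ/2) := by
            refine hbound t ht _ Finset.inter_subset_right ?_
            exact hher _ hF _ (Finset.union_subset_union subset_rfl Finset.inter_subset_left)
          have hxT' : insert m t ∈ T' := by
            rw [hT'mem]
            refine ⟨⟨t, ht, m, hms, rfl⟩, ?_⟩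
            refine hher _ hF _ ?_
            rw [Finset.insert_subset_iff]
            exact ⟨Finset.mem_union_right t hmw, Finset.subset_union_left⟩
          have hpart2 : ∑ γ ∈ w ∩ s', lam' γ < δ/2 := by
            refine hbound' _ hxT' _ Finset.inter_subset_right ?_
            refine hher _ hF _ ?_
            intro y hy
            rcases Finset.mem_union.1 hy with hy | hy
            · rcases Finset.mem_insert.1 hy with rfl | hy
              · exact Finset.mem_union_right t hmw
              · exact Finset.mem_union_left _ hy
            · exact Finset.mem_union_right _ (Finset.mem_inter.1 hy).1
          push_cast
          linarith
  obtain ⟨s, lam, hsA, hlam0, hvan, hsum, hbound⟩ := inner k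
  refine ⟨s, fun γ => lam γ / k, hsA, fun γ => div_nonneg (hlam0 γ) hkpos.le,
    fun γ hγ => by show lam γ / (k:ℝ) = 0; rw [hvan γ hγ, zero_div], ?_, ?_⟩
  · rw [← Finset.sum_div, hsum, div_self hkpos.ne']
  · intro t ht w hw hF
    have h1 : ∑ γ ∈ w, lam γ < 1 + k * (δ/2) := hbound t ht w hw hF
    rw [← Finset.sum_div, div_lt_iff₀ hkpos]
    have h2 : (1:ℝ) < δ / 2 * ↑k := by
      have h3 : (1:ℝ) / ↑k * ↑k < δ / 2 * ↑k := mul_lt_mul_of_pos_right hk hkpos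
      rwa [one_div, inv_mul_cancel₀ hkpos.ne'] at h3
    nlinarith [h1, h2]

theorem ptak [DecidableEq ι] {F : Set (Finset ι)} (hher : ∀ s ∈ F, ∀ t ⊆ s, t ∈ F)
    (hwf : WellFounded (FRel F)) {A : Set ι} (hA : A.Infinite) {δ : ℝ} (hδ : 0 < δ) :
    ∃ (s : Finset ι) (lam : ι → ℝ), ↑s ⊆ A ∧ (∀ γ, 0 ≤ lam γ) ∧ (∀ γ ∉ s, lam γ = 0) ∧
      (∑ γ ∈ s, lam γ = 1) ∧ ∀ w ∈ F, w ⊆ s → ∑ γ ∈ w, lam γ < δ := by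
  obtain ⟨s, lam, h1, h2, h3, h4, h5⟩ :=
    ptak_phi hher hwf (Order.succ ((hwf.apply ∅).rank)) {∅}
      (by simp [Order.lt_succ]) A hA (by simp) δ hδ
  refine ⟨s, lam, h1, h2, h3, h4, fun w hwF hws => ?_⟩
  have := h5 ∅ (Finset.mem_singleton_self _) w hws
  rw [Finset.empty_union] at this
  exact this hwF

/-! ### Basic facts about `normF` -/

theorem normF_bddAbove (F : Set (Finset ι)) (x : ι →₀ ℝ) :
    BddAbove ((fun s : Finset ι => |∑ γ ∈ s, x γ|) '' F) := by
  classical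
  refine ⟨∑ γ ∈ x.support, |x γ|, ?_⟩
  rintro - ⟨s, -, rfl⟩
  dsimp only
  have h1 : ∑ γ ∈ s, x γ = ∑ γ ∈ s ∩ x.support, x γ := by
    refine (Finset.sum_subset Finset.inter_subset_left fun γ hγ hnγ => ?_).symm
    by_contra hne
    exact hnγ (Finset.mem_inter.2 ⟨hγ, Finsupp.mem_support_iff.2 hne⟩)
  rw [h1]
  refine le_trans (Finset.abs_sum_le_sum_abs _ _) ?_
  exact Finset.sum_le_sum_of_subset_of_nonneg Finset.inter_subset_right
    fun γ _ _ => abs_nonneg _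

theorem le_normF {F : Set (Finset ι)} {s : Finset ι} (hs : s ∈ F) (x : ι →₀ ℝ) :
    |∑ γ ∈ s, x γ| ≤ normF F x :=
  le_csSup (normF_bddAbove F x) ⟨s, hs, rfl⟩

theorem normF_le {F : Set (Finset ι)} (hne : F.Nonempty) (x : ι →₀ ℝ) {c : ℝ}
    (h : ∀ s ∈ F, |∑ γ ∈ s, x γ| ≤ c) : normF F x ≤ c :=
  csSup_le (hne.image _) (by rintro - ⟨s, hs, rfl⟩; exact h s hs)

/-- Evaluation of a linear combination of unit vectors against a finite set. -/
theorem sum_comb_apply {β : Type*} (I : Finset β) (a : β → ℝ) (g : β → ι) (t : Finset ι)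
    [DecidableEq ι] :
    ∑ γ ∈ t, (∑ i ∈ I, a i • Finsupp.single (g i) (1:ℝ)) γ =
      ∑ i ∈ I.filter (fun i => g i ∈ t), a i := by
  classical
  have h1 : ∀ γ, (∑ i ∈ I, a i • Finsupp.single (g i) (1:ℝ)) γ
      = ∑ i ∈ I, a i * (if g i = γ then 1 else 0) := by
    intro γ
    rw [Finsupp.finset_sum_apply]
    refine Finset.sum_congr rfl fun i _ => ?_
    rw [Finsupp.smul_apply, Finsupp.single_apply, smul_eq_mul]
  simp only [h1]
  rw [Finset.sum_comm, Finset.sum_filter]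
  refine Finset.sum_congr rfl fun i _ => ?_
  rw [← Finset.mul_sum, Finset.sum_ite_eq t (g i) (fun _ => (1:ℝ)), mul_ite, mul_one, mul_zero]

theorem part_one [DecidableEq ι] {F : Set (Finset ι)}
    (hsingle : ∀ γ : ι, ({γ} : Finset ι) ∈ F) (γ : ι) :
    normF F (Finsupp.single γ 1) = 1 := by
  classical
  have hne : F.Nonempty := ⟨{γ}, hsingle γ⟩
  refine le_antisymm ?_ ?_
  · refine normF_le hne _ fun s _ => ?_
    have h1 : ∑ γ' ∈ s, (Finsupp.single γ (1:ℝ)) γ' = if γ ∈ s then 1 else 0 := by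
      simp only [Finsupp.single_apply]
      rw [Finset.sum_ite_eq]
    rw [h1]; split <;> norm_num
  · have h2 := le_normF (hsingle γ) (Finsupp.single γ 1)
    simpa using h2

theorem part_two [DecidableEq ι] {F : Set (Finset ι)}
    (hher : ∀ s ∈ F, ∀ t ⊆ s, t ∈ F) (hwf : WellFounded (FRel F))
    (hsingle : ∀ γ : ι, ({γ} : Finset ι) ∈ F)
    (f : (ι →₀ ℝ) →ₗ[ℝ] ℝ) (hf : ∃ C : ℝ, ∀ x, |f x| ≤ C * normF F x)
    (ε : ℝ) (hε : 0 < ε) : {γ | ε ≤ |f (Finsupp.single γ 1)|}.Finite := by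
  classical
  by_contra hinf
  have hinf : {γ | ε ≤ |f (Finsupp.single γ 1)|}.Infinite := hinf
  obtain ⟨C, hC⟩ := hf
  obtain ⟨γ₀, hγ₀⟩ := hinf.nonempty
  have hC0 : 0 < C := by
    have h1 := hC (Finsupp.single γ₀ 1)
    rw [part_one hsingle γ₀, mul_one] at h1
    exact lt_of_lt_of_le hε (le_trans hγ₀ h1)
  have hδ : 0 < ε / (2 * C) := by positivity
  obtain ⟨s, lam, hsB, hlam0, hvan, hsum, hbound⟩ := ptak hher hwf hinf hδ
  set e : ι → ℝ := fun γ => if 0 ≤ f (Finsupp.single γ 1) then 1 else -1 with he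
  set x : ι →₀ ℝ := ∑ γ' ∈ s, (lam γ' * e γ') • Finsupp.single γ' (1:ℝ) with hx
  have hfx : ε ≤ f x := by
    rw [hx, map_sum]
    have h2 : ∀ γ' ∈ s, f ((lam γ' * e γ') • Finsupp.single γ' 1)
        = lam γ' * |f (Finsupp.single γ' 1)| := by
      intro γ' _
      rw [map_smul, smul_eq_mul]
      by_cases h : 0 ≤ f (Finsupp.single γ' 1)
      · rw [he]; dsimp only; rw [if_pos h, abs_of_nonneg h]; ring
      · rw [he]; dsimp only; rw [if_neg h, abs_of_neg (lt_of_not_ge h)]; ring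
    rw [Finset.sum_congr rfl h2]
    calc ε = ε * ∑ γ' ∈ s, lam γ' := by rw [hsum, mul_one]
    _ = ∑ γ' ∈ s, ε * lam γ' := Finset.mul_sum _ _ _
    _ ≤ ∑ γ' ∈ s, lam γ' * |f (Finsupp.single γ' 1)| := by
        refine Finset.sum_le_sum fun γ' hγ' => ?_
        have hb : ε ≤ |f (Finsupp.single γ' 1)| := hsB hγ'
        rw [mul_comm ε (lam γ')]
        exact mul_le_mul_of_nonneg_left hb (hlam0 γ')
  have hnx : normF F x ≤ ε / (2 * C) := by
    refine normF_le ⟨{γ₀}, hsingle γ₀⟩ _ fun v hv => ?_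
    rw [hx, sum_comb_apply s (fun γ' => lam γ' * e γ') (fun γ' => γ') v]
    set w : Finset ι := s.filter (fun γ' => γ' ∈ v) with hw
    have hsplit : ∑ γ' ∈ w, lam γ' * e γ'
        = ∑ γ' ∈ w.filter (fun γ' => 0 ≤ f (Finsupp.single γ' 1)), lam γ'
          - ∑ γ' ∈ w.filter (fun γ' => ¬ 0 ≤ f (Finsupp.single γ' 1)), lam γ' := by
      rw [← Finset.sum_filter_add_sum_filter_not w (fun γ' => 0 ≤ f (Finsupp.single γ' 1))]
      rw [sub_eq_add_neg, ← Finset.sum_neg_distrib]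
      congr 1
      · refine Finset.sum_congr rfl fun γ' hγ' => ?_
        rw [he]; dsimp only; rw [if_pos (Finset.mem_filter.1 hγ').2, mul_one]
      · refine Finset.sum_congr rfl fun γ' hγ' => ?_
        rw [he]; dsimp only; rw [if_neg (Finset.mem_filter.1 hγ').2]; ring
    rw [hsplit]
    have hgen : ∀ p : ι → Prop, ∀ hp : DecidablePred p,
        0 ≤ ∑ γ' ∈ w.filter p, lam γ' ∧ ∑ γ' ∈ w.filter p, lam γ' < ε / (2 * C) := by
      intro p hp
      constructor
      · exact Finset.sum_nonneg fun γ' _ => hlam0 γ'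
      · refine hbound _ ?_ ?_
        · refine hher v hv _ fun γ' hγ' => ?_
          have h7 := (Finset.filter_subset _ _) hγ'
          rw [hw, Finset.mem_filter] at h7
          exact h7.2
        · exact (Finset.filter_subset _ _).trans (Finset.filter_subset _ _)
    obtain ⟨ha0, ha1⟩ := hgen (fun γ' => 0 ≤ f (Finsupp.single γ' 1)) (by infer_instance)
    obtain ⟨hb0, hb1⟩ := hgen (fun γ' => ¬ 0 ≤ f (Finsupp.single γ' 1)) (by infer_instance)
    have habs : |∑ γ' ∈ w.filter (fun γ' => 0 ≤ f (Finsupp.single γ' 1)), lam γ'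
        - ∑ γ' ∈ w.filter (fun γ' => ¬ 0 ≤ f (Finsupp.single γ' 1)), lam γ'| < ε / (2 * C) :=
      abs_sub_lt_iff.mpr ⟨by linarith, by linarith⟩
    exact habs.le
  have h3 := hC x
  have h4 : C * normF F x ≤ C * (ε / (2 * C)) := mul_le_mul_of_nonneg_left hnx hC0.le
  have h5 : C * (ε / (2 * C)) = ε / 2 := by field_simp
  have h6 : f x ≤ |f x| := le_abs_self _
  linarith

theorem part_three {ι : Type*} [LinearOrder ι] {F : Set (Finset ι)}
    (hher : ∀ s ∈ F, ∀ t ⊆ s, t ∈ F) (hwf : WellFounded (FRel F))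
    (hlarge : ∀ A : Set ι, A.Infinite → ∀ n : ℕ, ∃ s ∈ F, ↑s ⊆ A ∧ s.card = n)
    (A : Set ι) (hA : A.Infinite) (K : ℝ) (hK : 1 ≤ K) :
    ∃ s t : Finset ι, ↑s ⊆ A ∧ ↑t ⊆ A ∧
      ∃ h : s.card = t.card, ∃ a : Fin s.card → ℝ,
        K * normF F (∑ i, a i • Finsupp.single (s.orderEmbOfFin rfl i) (1 : ℝ)) <
          normF F (∑ i, a i • Finsupp.single (t.orderEmbOfFin h.symm i) (1 : ℝ)) := by
  classical
  have hK0 : 0 < K := lt_of_lt_of_le zero_lt_one hK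
  have hδ : 0 < 1 / (2 * K) := by positivity
  obtain ⟨s, lam, hsA, hlam0, hvan, hsum, hbound⟩ := ptak hher hwf hA hδ
  obtain ⟨t, htF, htA, htcard⟩ := hlarge A hA s.card
  have hFne : F.Nonempty := ⟨t, htF⟩
  refine ⟨s, t, hsA, htA, htcard.symm, fun i => lam (s.orderEmbOfFin rfl i), ?_⟩
  set m := s.card with hm
  set a : Fin m → ℝ := fun i => lam (s.orderEmbOfFin rfl i) with ha
  set embS := s.orderEmbOfFin rfl with hembS
  set embT := t.orderEmbOfFin htcard.symm.symm with hembT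
  -- the image of univ under embS is s
  have himg : Finset.image (fun i => embS i) Finset.univ = s := by
    apply Finset.eq_of_subset_of_card_le
    · intro γ hγ
      obtain ⟨i, -, rfl⟩ := Finset.mem_image.1 hγ
      exact Finset.orderEmbOfFin_mem s rfl i
    · rw [Finset.card_image_of_injective _ (embS.injective), Finset.card_univ, Fintype.card_fin]
  -- norm of the `s`-vector is at most 1/(2K)
  have hxs : normF F (∑ i, a i • Finsupp.single (embS i) (1:ℝ)) ≤ 1 / (2 * K) := by
    refine normF_le hFne _ fun v hv => ?_
    rw [sum_comb_apply Finset.univ a (fun i => embS i) v]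
    set I := Finset.univ.filter (fun i => embS i ∈ v) with hI
    set w : Finset ι := Finset.image (fun i => embS i) I with hwdef
    have hsum_eq : ∑ i ∈ I, a i = ∑ γ ∈ w, lam γ := by
      rw [hwdef, Finset.sum_image (fun x _ y _ h => embS.injective h)]
    have hws : w ⊆ s := by
      intro γ hγ
      obtain ⟨i, -, rfl⟩ := Finset.mem_image.1 hγ
      exact Finset.orderEmbOfFin_mem s rfl i
    have hwv : w ⊆ v := by
      intro γ hγ
      obtain ⟨i, hi, rfl⟩ := Finset.mem_image.1 hγ
      exact (Finset.mem_filter.1 hi).2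
    have hwF : w ∈ F := hher v hv w hwv
    have h1 : ∑ γ ∈ w, lam γ < 1 / (2 * K) := hbound w hwF hws
    have h0 : 0 ≤ ∑ i ∈ I, a i := Finset.sum_nonneg fun i _ => hlam0 _
    rw [abs_of_nonneg h0, hsum_eq]
    exact h1.le
  -- norm of the `t`-vector is at least 1
  have hxt : (1:ℝ) ≤ normF F (∑ i, a i • Finsupp.single (embT i) (1:ℝ)) := by
    have h2 := le_normF htF (∑ i, a i • Finsupp.single (embT i) (1:ℝ))
    rw [sum_comb_apply Finset.univ a (fun i => embT i) t] at h2
    have hfull : Finset.univ.filter (fun i => embT i ∈ t) = Finset.univ := by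
      refine Finset.filter_true_of_mem fun i _ => ?_
      exact Finset.orderEmbOfFin_mem t htcard.symm.symm i
    rw [hfull] at h2
    have h3 : ∑ i : Fin m, a i = 1 := by
      rw [ha]
      have h4 : ∑ γ ∈ Finset.image (fun i => embS i) Finset.univ, lam γ
          = ∑ i : Fin m, lam (embS i) :=
        Finset.sum_image (fun x _ y _ h => embS.injective h)
      rw [himg] at h4
      rw [← h4, hsum]
    rw [h3] at h2
    simpa using h2
  calc K * normF F (∑ i, a i • Finsupp.single (embS i) (1:ℝ))
      ≤ K * (1 / (2 * K)) := mul_le_mul_of_nonneg_left hxs hK0.le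
    _ = 1 / 2 := by field_simp
    _ < 1 := by norm_num
    _ ≤ normF F (∑ i, a i • Finsupp.single (embT i) (1:ℝ)) := hxt


/-- Given a hereditary, compact and large family `F` of finite subsets of an infinite
cardinal `κ` containing all singletons, the unit vectors of `(c₀₀(κ), ‖·‖_F)` form a
normalized weakly null sequence with no subsymmetric subsequence. -/
theorem stmt15 (κ : Cardinal) (hκ : Cardinal.aleph0 ≤ κ)
    (F : Set (Finset {α : Ordinal // α < κ.ord}))
    (hher : ∀ s ∈ F, ∀ t ⊆ s, t ∈ F)
    (hclosed : IsClosed {f : {α : Ordinal // α < κ.ord} → Bool |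
      ∃ s ∈ F, ∀ a, f a = true ↔ a ∈ s})
    (hlarge : ∀ A : Set {α : Ordinal // α < κ.ord}, A.Infinite →
      ∀ n : ℕ, ∃ s ∈ F, ↑s ⊆ A ∧ s.card = n)
    (hsingle : ∀ γ : {α : Ordinal // α < κ.ord}, ({γ} : Finset _) ∈ F) :
    -- (i) the unit vectors are normalized
    (∀ γ, normF F (Finsupp.single γ 1) = 1) ∧
    -- (ii) the unit vectors are weakly null
    (∀ f : ({α : Ordinal // α < κ.ord} →₀ ℝ) →ₗ[ℝ] ℝ,
      (∃ C : ℝ, ∀ x, |f x| ≤ C * normF F x) →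
      ∀ ε : ℝ, 0 < ε → {γ | ε ≤ |f (Finsupp.single γ 1)|}.Finite) ∧
    -- (iii) no infinite subsequence is subsymmetric
    (∀ A : Set {α : Ordinal // α < κ.ord}, A.Infinite → ∀ K : ℝ, 1 ≤ K →
      ∃ s t : Finset {α : Ordinal // α < κ.ord}, ↑s ⊆ A ∧ ↑t ⊆ A ∧
        ∃ h : s.card = t.card, ∃ a : Fin s.card → ℝ,
          K * normF F (∑ i, a i • Finsupp.single (s.orderEmbOfFin rfl i) (1 : ℝ)) <
            normF F (∑ i, a i • Finsupp.single (t.orderEmbOfFin h.symm i) (1 : ℝ))) := by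
  classical
  have hwf := FRel_wf F hclosed
  exact ⟨fun γ => part_one hsingle γ,
    fun f hf ε hε => part_two hher hwf hsingle f hf ε hε,
    fun A hA K hK => part_three hher hwf hlarge A hA K hK⟩
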